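/- Let p > 0 and X_p a random variable with the p-singular Cantor-type distribution F_p. Then E[X_p] = (3/2)·p/(2p+1). -/

import Mathlib

open MeasureTheory Set Filter

/-- The CDF of the p-singular Cantor-type distribution: the monotone increasing
function on [0,1] with F(x/3) = F(x)/(p+1) for x ∈ [0,1] and
F(1-x) = 1 - p·F(x) for x ∈ [0,1/3]. -/
def IsCantorCDFp (p : ℝ) (F : ℝ → ℝ) : Prop :=
  Monotone F ∧
    (∀ x ∈ Set.Icc (0:ℝ) 1, F (x/3) = F x / (p+1)) ∧
    (∀ x ∈ Set.Icc (0:ℝ) (1/3), F (1-x) = 1 - p * F x)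

/-- The mean residual life function of a distribution with CDF F supported on [0,1]:
m(x) = (1/(1-F(x))) ∫_x^1 (1-F(u)) du  (equal to 0 at x = 1 by convention). -/
noncomputable def mrl (F : ℝ → ℝ) (x : ℝ) : ℝ :=
  (∫ u in x..(1:ℝ), (1 - F u)) / (1 - F x)

/-- The expected value of the p-singular Cantor-type random variable:
E[X_p] = ∫_0^1 (1 - F_p(u)) du = (3/2)·p/(2p+1). -/
theorem cantorp_expectation (p : ℝ) (hp : 0 < p) (F : ℝ → ℝ) (hF : IsCantorCDFp p F) :
    ∫ u in (0:ℝ)..1, (1 - F u) = 3/2 * (p / (2 * p + 1)) := by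
  obtain ⟨hMono, hScale, hSym⟩ := hF
  have hp1 : (p : ℝ) + 1 ≠ 0 := by linarith
  have h2p1 : (2 * p + 1 : ℝ) ≠ 0 := by linarith
  -- F 0 = 0
  have hF0 : F 0 = 0 := by
    have h := hScale 0 ⟨le_refl _, by norm_num⟩
    rw [show (0:ℝ)/3 = 0 by norm_num] at h
    rw [eq_div_iff hp1] at h
    have h3 : F 0 * p = 0 := by nlinarith
    rcases mul_eq_zero.mp h3 with h4 | h4
    · exact h4
    · linarith
  -- F 1 = 1
  have hF1 : F 1 = 1 := by
    have := hSym 0 ⟨le_refl _, by norm_num⟩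
    simpa [hF0] using this
  -- F (1/3) = 1/(p+1)
  have hF13 : F (1/3) = 1 / (p + 1) := by
    have := hScale 1 ⟨by norm_num, le_refl _⟩
    rw [hF1] at this
    simpa using this
  -- F (2/3) = 1/(p+1)
  have hF23 : F (2/3) = 1 / (p + 1) := by
    have := hSym (1/3) ⟨by norm_num, le_refl _⟩
    rw [hF13] at this
    rw [show (1:ℝ) - 1/3 = 2/3 by norm_num] at this
    rw [this]; field_simp; ring
  -- F constant 1/(p+1) on [1/3, 2/3]
  have hmid : ∀ x ∈ Set.uIcc (1/3 : ℝ) (2/3), F x = 1 / (p + 1) := by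
    intro x hx
    rw [Set.uIcc_of_le (by norm_num)] at hx
    have h1 := hMono hx.1
    have h2 := hMono hx.2
    rw [hF13] at h1; rw [hF23] at h2
    linarith
  -- integrability
  have hint : ∀ a b : ℝ, IntervalIntegrable F volume a b := fun a b =>
    hMono.intervalIntegrable
  -- substitution: ∫_0^1 F(x/3) dx = 3 ∫_0^{1/3} F
  have hsub1 : ∫ x in (0:ℝ)..1, F (x/3) = 3 * ∫ x in (0:ℝ)..(1/3), F x := by
    have := intervalIntegral.integral_comp_div (a := (0:ℝ)) (b := 1) (c := 3) F
      (by norm_num)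
    rw [this]
    norm_num
  -- ∫_0^1 F(x/3) dx = (∫_0^1 F) / (p+1)
  have hsub2 : ∫ x in (0:ℝ)..1, F (x/3) = (∫ x in (0:ℝ)..1, F x) / (p + 1) := by
    rw [intervalIntegral.integral_congr (g := fun x => F x / (p+1))
      (fun x hx => hScale x (by rwa [Set.uIcc_of_le (by norm_num)] at hx)),
      intervalIntegral.integral_div]
  -- reflection: ∫_0^{1/3} F(1-x) dx = ∫_{2/3}^1 F
  have hsub3 : ∫ x in (0:ℝ)..(1/3), F (1 - x) = ∫ x in (2/3:ℝ)..1, F x := by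
    have := intervalIntegral.integral_comp_sub_left (a := (0:ℝ)) (b := 1/3) F 1
    rw [this]; norm_num
  have hsub4 : ∫ x in (0:ℝ)..(1/3), F (1 - x)
      = 1/3 - p * ∫ x in (0:ℝ)..(1/3), F x := by
    rw [intervalIntegral.integral_congr (g := fun x => 1 - p * F x)
      (fun x hx => hSym x (by rwa [Set.uIcc_of_le (by norm_num)] at hx))]
    rw [intervalIntegral.integral_sub intervalIntegrable_const
      ((hint 0 (1/3)).const_mul p)]
    rw [intervalIntegral.integral_const_mul]
    simp
  -- middle integral
  have hmidint : ∫ x in (1/3:ℝ)..(2/3), F x = 1/3 * (1 / (p + 1)) := by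
    rw [intervalIntegral.integral_congr hmid, intervalIntegral.integral_const,
      smul_eq_mul]
    norm_num
  -- split the integral
  have hsplit : ∫ x in (0:ℝ)..1, F x
      = (∫ x in (0:ℝ)..(1/3), F x) + (∫ x in (1/3:ℝ)..(2/3), F x)
        + (∫ x in (2/3:ℝ)..1, F x) := by
    rw [intervalIntegral.integral_add_adjacent_intervals (hint 0 (1/3)) (hint (1/3) (2/3)),
      intervalIntegral.integral_add_adjacent_intervals (hint 0 (2/3)) (hint (2/3) 1)]
  set I := ∫ x in (0:ℝ)..1, F x with hI
  set A := ∫ x in (0:ℝ)..(1/3), F x with hA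
  have e1 : I / (p + 1) = 3 * A := by rw [← hsub1, hsub2]
  have e2 : I = A + 1/3 * (1 / (p+1)) + (1/3 - p * A) := by
    rw [hsplit, hmidint, ← hsub3, hsub4]
  have hIval : I = (p + 2) / (2 * (2 * p + 1)) := by
    have hA' : A = I / (3 * (p + 1)) := by
      field_simp at e1 ⊢
      linarith
    rw [hA'] at e2
    field_simp at e2 ⊢
    nlinarith [e2]
  rw [intervalIntegral.integral_sub intervalIntegrable_const (hint 0 1)]
  simp only [intervalIntegral.integral_const, smul_eq_mul, mul_one, ← hI]
  rw [hIval]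
  field_simp
  ring
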